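/- Let Z be a square-integrable real random variable bounded above by b > 0. Then E[e^Z] ≤ exp(E[Z] + (φ(b)/2)·E[Z²]), where φ(u) = (e^u − 1 − u)/(u²/2) for u ≠ 0 and φ(0) = 1. -/

import Mathlib

open MeasureTheory Real

noncomputable def phi (u : ℝ) : ℝ := if u = 0 then 1 else 2 * (Real.exp u - 1 - u) / u ^ 2

lemma lemA (u : ℝ) : 0 ≤ (u - 1) * Real.exp u + 1 := by
  have h1 : 1 - u ≤ Real.exp (-u) := by have := Real.add_one_le_exp (-u); linarith
  have h2 : Real.exp (-u) * Real.exp u = 1 := by rw [← Real.exp_add]; simp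
  nlinarith [mul_le_mul_of_nonneg_right h1 (Real.exp_pos u).le]

-- q(z) = e^z - 1 - z - z^2/2 is monotone
lemma lemQ : Monotone (fun z : ℝ => Real.exp z - 1 - z - z ^ 2 / 2) := by
  apply monotone_of_deriv_nonneg
  · fun_prop
  · intro x
    have h : HasDerivAt (fun z : ℝ => Real.exp z - 1 - z - z ^ 2 / 2)
        (Real.exp x - 0 - 1 - 2 * x ^ 1 / 2) x := by
      have := ((((Real.hasDerivAt_exp x).sub_const 1).sub (hasDerivAt_id' x)).sub
        ((hasDerivAt_pow 2 x).div_const 2))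
      exact this.congr_deriv (by simp)
    rw [h.deriv]
    have := Real.add_one_le_exp x
    nlinarith

lemma lemQ_neg {z : ℝ} (hz : z ≤ 0) : Real.exp z - 1 - z ≤ z ^ 2 / 2 := by
  have := lemQ hz
  simp only [Real.exp_zero] at this
  nlinarith

lemma lemQ_pos {z : ℝ} (hz : 0 ≤ z) : z ^ 2 / 2 ≤ Real.exp z - 1 - z := by
  have := lemQ hz
  simp only [Real.exp_zero] at this
  nlinarith

-- g(u) = (u-2)e^u + u + 2 is monotone
lemma lemG : Monotone (fun u : ℝ => (u - 2) * Real.exp u + u + 2) := by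
  apply monotone_of_deriv_nonneg
  · fun_prop
  · intro x
    have h : HasDerivAt (fun u : ℝ => (u - 2) * Real.exp u + u + 2)
        ((1 - 0) * Real.exp x + (x - 2) * Real.exp x + 1 + 0) x := by
      have := ((((hasDerivAt_id x).sub_const 2).mul (Real.hasDerivAt_exp x)).add
        (hasDerivAt_id x)).add_const 2
      simpa using this
    rw [h.deriv]
    have := lemA x
    nlinarith

lemma lemG_nonneg {u : ℝ} (hu : 0 ≤ u) : 0 ≤ (u - 2) * Real.exp u + u + 2 := by
  have := lemG hu
  simp only [Real.exp_zero] at this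
  nlinarith

-- f monotone on Ioi 0
lemma lemF : MonotoneOn (fun u : ℝ => (Real.exp u - 1 - u) / u ^ 2) (Set.Ioi 0) := by
  apply monotoneOn_of_deriv_nonneg (convex_Ioi 0)
  · apply ContinuousOn.div
    · fun_prop
    · fun_prop
    · intro x hx
      have : (0:ℝ) < x := hx
      positivity
  · rw [interior_Ioi]
    intro x hx
    have hx0 : (0:ℝ) < x := hx
    exact (((Real.hasDerivAt_exp x).sub_const 1).sub (hasDerivAt_id x)).div
      (hasDerivAt_pow 2 x) (by positivity) |>.differentiableAt.differentiableWithinAt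
  · rw [interior_Ioi]
    intro x hx
    have hx0 : (0:ℝ) < x := hx
    have h : HasDerivAt (fun u : ℝ => (Real.exp u - 1 - u) / u ^ 2)
        (((Real.exp x - 1) * x ^ 2 - (Real.exp x - 1 - x) * (2 * x)) / (x ^ 2) ^ 2) x := by
      have := (((Real.hasDerivAt_exp x).sub_const 1).sub (hasDerivAt_id' x)).div
        (hasDerivAt_pow 2 x) (by positivity : x ^ 2 ≠ 0)
      exact this.congr_deriv (by simp)
    rw [h.deriv]
    have hg := lemG_nonneg hx0.le
    apply div_nonneg _ (by positivity)
    nlinarith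

-- key pointwise lemma
lemma key {b : ℝ} (hb : 0 < b) {z : ℝ} (hz : z ≤ b) :
    Real.exp z ≤ 1 + z + phi b / 2 * z ^ 2 := by
  have hb0 : b ≠ 0 := hb.ne'
  have hphi : phi b / 2 = (Real.exp b - 1 - b) / b ^ 2 := by
    simp [phi, hb0]; ring
  rw [hphi]
  have hbq : b ^ 2 / 2 ≤ Real.exp b - 1 - b := lemQ_pos hb.le
  rcases le_or_gt z 0 with h | h
  · have h1 := lemQ_neg h
    have h2 : (1:ℝ)/2 ≤ (Real.exp b - 1 - b) / b ^ 2 := by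
      rw [div_le_div_iff₀ (by norm_num) (by positivity)]
      nlinarith
    nlinarith [sq_nonneg z]
  · have := lemF (Set.mem_Ioi.mpr h) (Set.mem_Ioi.mpr hb) hz
    have hz2 : (0:ℝ) < z ^ 2 := by positivity
    rw [div_le_div_iff₀ hz2 (by positivity)] at this
    have hb2 : (0:ℝ) < b ^ 2 := by positivity
    have h3 : Real.exp z - 1 - z ≤ (Real.exp b - 1 - b) / b ^ 2 * z ^ 2 := by
      rw [div_mul_eq_mul_div, le_div_iff₀ hb2]
      nlinarith
    linarith

theorem stmt0 {Ω : Type*} [MeasurableSpace Ω] (μ : Measure Ω) [IsProbabilityMeasure μ]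
    (Z : Ω → ℝ) (hZmeas : Measurable Z) (b : ℝ) (hb : 0 < b)
    (hZb : ∀ᵐ ω ∂μ, Z ω ≤ b)
    (hZint : Integrable Z μ) (hZ2int : Integrable (fun ω => (Z ω) ^ 2) μ) :
    ∫ ω, Real.exp (Z ω) ∂μ ≤
      Real.exp ((∫ ω, Z ω ∂μ) + phi b / 2 * ∫ ω, (Z ω) ^ 2 ∂μ) := by
  set c := phi b / 2 with hc
  have hg_int : Integrable (fun ω => 1 + Z ω + c * Z ω ^ 2) μ :=
    ((integrable_const 1).add hZint).add (hZ2int.const_mul c)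
  have hpt : ∀ᵐ ω ∂μ, Real.exp (Z ω) ≤ 1 + Z ω + c * Z ω ^ 2 := by
    filter_upwards [hZb] with ω hω
    exact key hb hω
  have hexp_int : Integrable (fun ω => Real.exp (Z ω)) μ := by
    apply hg_int.mono' (Real.measurable_exp.comp hZmeas).aestronglyMeasurable
    filter_upwards [hpt] with ω hω
    simp only [Function.comp_apply, Real.norm_eq_abs, abs_of_pos (Real.exp_pos _)]
    exact hω
  calc ∫ ω, Real.exp (Z ω) ∂μ ≤ ∫ ω, (1 + Z ω + c * Z ω ^ 2) ∂μ :=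
        integral_mono_ae hexp_int hg_int hpt
    _ = 1 + (∫ ω, Z ω ∂μ) + c * ∫ ω, Z ω ^ 2 ∂μ := by
        have hi1 : Integrable (fun ω => 1 + Z ω) μ := (integrable_const 1).add hZint
        rw [integral_add hi1 (hZ2int.const_mul c), integral_add (integrable_const 1) hZint,
          integral_const, integral_const_mul]
        simp
    _ ≤ Real.exp ((∫ ω, Z ω ∂μ) + c * ∫ ω, Z ω ^ 2 ∂μ) := by
        have := Real.add_one_le_exp ((∫ ω, Z ω ∂μ) + c * ∫ ω, Z ω ^ 2 ∂μ)
        linarith
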